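/- Fefferman–Stein inequality for the dyadic maximal operator: for every weight w and every f ∈ L¹(ℳw), one has ‖ℳf‖_{L^{1,∞}(w)} ≤ ‖f‖_{L¹(ℳw)}, i.e., for all λ > 0, w({ℳf > λ}) ≤ λ^{-1} ∫ |f| ℳw dμ. -/

import Mathlib

open MeasureTheory
open scoped ENNReal

/-- In a nested finite family of sets, the maximal elements cover the union and are
pairwise disjoint. -/
lemma nested_max_aux {α : Type*} (𝒟 : Set (Set α))
    (hnest : ∀ Q ∈ 𝒟, ∀ Q' ∈ 𝒟, Disjoint Q Q' ∨ Q ⊆ Q' ∨ Q' ⊆ Q)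
    (F : Finset (Set α)) (hF : ↑F ⊆ 𝒟) :
    ∃ G : Finset (Set α), G ⊆ F ∧ (⋃ Q ∈ F, Q) ⊆ (⋃ Q ∈ G, Q) ∧
      (G : Set (Set α)).PairwiseDisjoint id := by
  classical
  refine ⟨F.filter (fun Q => ∀ Q' ∈ F, ¬ Q ⊂ Q'), Finset.filter_subset _ _, ?_, ?_⟩
  · intro x hx
    simp only [Set.mem_iUnion] at hx ⊢
    obtain ⟨Q, hQF, hxQ⟩ := hx
    have hSne : (F.filter (fun Q' => Q ⊆ Q')).Nonempty :=
      ⟨Q, by simp [hQF]⟩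
    obtain ⟨m, hmS, hmax⟩ := Finset.exists_maximal hSne
    rw [Finset.mem_filter] at hmS
    have hmF : m ∈ F := hmS.1
    have hQm : Q ⊆ m := hmS.2
    refine ⟨m, ?_, hQm hxQ⟩
    rw [Finset.mem_filter]
    refine ⟨hmF, fun Q' hQ' hlt => ?_⟩
    exact hlt.2 (hmax (Finset.mem_filter.2 ⟨hQ', hQm.trans hlt.subset⟩) hlt.subset)
  · intro Q hQ Q' hQ' hne
    rw [Finset.coe_filter, Set.mem_setOf_eq] at hQ hQ'
    rcases hnest Q (hF hQ.1) Q' (hF hQ'.1) with hd | hss | hss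
    · exact hd
    · exact absurd (lt_of_le_of_ne hss hne) (hQ.2 Q' hQ'.1)
    · exact absurd (lt_of_le_of_ne hss (Ne.symm hne)) (hQ'.2 Q hQ.1)

/-- Fefferman–Stein inequality for the dyadic maximal operator: for every weight `w`, every
`f` and every `λ > 0`, `λ · w({ℳf > λ}) ≤ ∫ |f| ℳw dμ`, i.e.
`‖ℳf‖_{L^{1,∞}(w)} ≤ ‖f‖_{L¹(ℳw)}`. -/
theorem stmt_8 {α : Type*} [MeasurableSpace α] (μ : Measure α)
    (𝒟 : Set (Set α)) (hcount : 𝒟.Countable)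
    (hmeas : ∀ Q ∈ 𝒟, MeasurableSet Q)
    (hfin : ∀ Q ∈ 𝒟, 0 < μ Q ∧ μ Q < ⊤)
    (hnest : ∀ Q ∈ 𝒟, ∀ Q' ∈ 𝒟, Disjoint Q Q' ∨ Q ⊆ Q' ∨ Q' ⊆ Q)
    (M : (α → ℝ≥0∞) → α → ℝ≥0∞)
    (hM : M = fun g x => ⨆ Q ∈ 𝒟, ⨆ (_ : x ∈ Q), (μ Q)⁻¹ * ∫⁻ y in Q, g y ∂μ)
    (w f : α → ℝ≥0∞) (hw : Measurable w) (hf : Measurable f)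
    (lam : ℝ≥0∞) (hlam : 0 < lam) :
    lam * ∫⁻ x in {x | lam < M f x}, w x ∂μ ≤ ∫⁻ x, f x * M w x ∂μ := by
  classical
  set ν := μ.withDensity w with hν
  -- lower bound for M w on a cube
  have hMw : ∀ Q ∈ 𝒟, ∀ x ∈ Q, (μ Q)⁻¹ * ∫⁻ y in Q, w y ∂μ ≤ M w x := by
    intro Q hQ x hx
    rw [hM]
    exact le_iSup₂_of_le Q hQ (le_iSup_of_le hx le_rfl)
  -- per-cube estimate
  have key : ∀ Q ∈ 𝒟, lam ≤ (μ Q)⁻¹ * ∫⁻ y in Q, f y ∂μ →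
      lam * ν Q ≤ ∫⁻ x in Q, f x * M w x ∂μ := by
    intro Q hQ hbad
    have hνQ : ν Q = ∫⁻ y in Q, w y ∂μ := withDensity_apply w (hmeas Q hQ)
    calc lam * ν Q ≤ ((μ Q)⁻¹ * ∫⁻ y in Q, f y ∂μ) * ν Q := mul_le_mul_left hbad _
    _ = (∫⁻ y in Q, f y ∂μ) * ((μ Q)⁻¹ * ν Q) := by ring
    _ = ∫⁻ x in Q, f x * ((μ Q)⁻¹ * ν Q) ∂μ := (lintegral_mul_const _ hf).symm
    _ ≤ ∫⁻ x in Q, f x * M w x ∂μ := by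
        refine setLIntegral_mono' (hmeas Q hQ) fun x hx => ?_
        refine mul_le_mul_right ?_ _
        rw [hνQ]
        exact hMw Q hQ x hx
  -- the set of bad cubes
  set B : Set (Set α) := {Q | Q ∈ 𝒟 ∧ lam < (μ Q)⁻¹ * ∫⁻ y in Q, f y ∂μ} with hB
  have hBD : B ⊆ 𝒟 := fun Q hQ => hQ.1
  have hsub : {x | lam < M f x} ⊆ ⋃ Q ∈ B, Q := by
    intro x hx
    rw [Set.mem_setOf_eq, hM] at hx
    simp only [lt_iSup_iff] at hx
    obtain ⟨Q, hQ, hxQ, hlt⟩ := hx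
    exact Set.mem_biUnion (⟨hQ, hlt⟩ : Q ∈ B) hxQ
  have hUmeas : MeasurableSet (⋃ Q ∈ B, Q) :=
    MeasurableSet.biUnion (hcount.mono hBD) fun Q hQ => hmeas Q (hBD hQ)
  -- main estimate for the union of bad cubes
  have main : lam * ν (⋃ Q ∈ B, Q) ≤ ∫⁻ x, f x * M w x ∂μ := by
    rcases Set.eq_empty_or_nonempty B with h | h
    · simp [h]
    obtain ⟨q, hq⟩ := (hcount.mono hBD).exists_eq_range h
    have hqB : ∀ n, q n ∈ B := fun n => hq ▸ Set.mem_range_self n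
    have hUeq : (⋃ Q ∈ B, Q) = ⋃ n, q n := by
      rw [hq, Set.biUnion_range]
    set A : ℕ → Set α := fun n => ⋃ j ∈ Finset.range (n + 1), q j with hA
    have hAmono : Monotone A := by
      intro m k hmk x hx
      simp only [hA, Set.mem_iUnion, Finset.mem_range] at hx ⊢
      obtain ⟨j, hj, hxj⟩ := hx
      exact ⟨j, by omega, hxj⟩
    have hAU : (⋃ n, A n) = ⋃ n, q n := by
      ext x
      simp only [hA, Set.mem_iUnion, Finset.mem_range]
      constructor
      · rintro ⟨n, j, hj, hxj⟩; exact ⟨j, hxj⟩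
      · rintro ⟨n, hxn⟩; exact ⟨n, n, by omega, hxn⟩
    have hνU : ν (⋃ Q ∈ B, Q) = ⨆ n, ν (A n) := by
      rw [hUeq, ← hAU, hAmono.directed_le.measure_iUnion]
    rw [hνU, ENNReal.mul_iSup]
    refine iSup_le fun n => ?_
    -- finite family of cubes
    set F : Finset (Set α) := (Finset.range (n + 1)).image q with hF
    have hFB : ↑F ⊆ B := by
      intro Q hQ
      simp only [hF, Finset.coe_image, Set.mem_image] at hQ
      obtain ⟨j, _, rfl⟩ := hQ
      exact hqB j
    have hAF : A n = ⋃ Q ∈ F, Q := by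
      ext x
      simp only [hA, hF, Set.mem_iUnion, Finset.mem_range, Finset.mem_image]
      constructor
      · rintro ⟨j, hj, hxj⟩; exact ⟨q j, ⟨j, hj, rfl⟩, hxj⟩
      · rintro ⟨Q, ⟨j, hj, rfl⟩, hxQ⟩; exact ⟨j, hj, hxQ⟩
    obtain ⟨G, hGF, hcover, hdisj⟩ :=
      nested_max_aux 𝒟 hnest F (fun Q hQ => hBD (hFB hQ))
    have hGB : ∀ Q ∈ G, Q ∈ B := fun Q hQ => hFB (hGF hQ)
    calc lam * ν (A n) ≤ lam * ν (⋃ Q ∈ G, Q) := by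
          rw [hAF]
          exact mul_le_mul_right (measure_mono hcover) _
    _ ≤ lam * ∑ Q ∈ G, ν Q := mul_le_mul_right (measure_biUnion_finset_le _ _) _
    _ = ∑ Q ∈ G, lam * ν Q := Finset.mul_sum _ _ _
    _ ≤ ∑ Q ∈ G, ∫⁻ x in Q, f x * M w x ∂μ := by
          refine Finset.sum_le_sum fun Q hQ => ?_
          exact key Q (hGB Q hQ).1 (hGB Q hQ).2.le
    _ = ∫⁻ x in ⋃ Q ∈ G, Q, f x * M w x ∂μ := by
          have h := lintegral_biUnion_finset (μ := μ) (f := fun x => f x * M w x)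
            hdisj (fun Q hQ => hmeas Q (hBD (hGB Q hQ)))
          simpa using h.symm
    _ ≤ ∫⁻ x, f x * M w x ∂μ := setLIntegral_le_lintegral _ _
  -- conclude
  have hL : (∫⁻ x in {x | lam < M f x}, w x ∂μ) ≤ ν (⋃ Q ∈ B, Q) := by
    rw [withDensity_apply w hUmeas]
    exact lintegral_mono_set hsub
  exact le_trans (mul_le_mul_right hL _) main
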